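/- Let C_n be a cycle (n ≥ 3) with two specified adjacent vertices p1, p2 precolored properly with colors from {1,2,3}. Then this precoloring extends to a proper coloring of C_n with colors {1,2,3} such that exactly one vertex of the cycle attains the maximum color appearing on the cycle. -/

import Mathlib

/-- An abstract plane graph: a graph together with its set of faces,
each face recorded by the set of vertices incident with it, and a
distinguished outer (unbounded) face. -/
structure PlaneGraph (V : Type) where
  graph : SimpleGraph V
  Faces : Set (Set V)
  outer : Set V
  outer_mem : outer ∈ Faces

/-- Degree of a vertex in a plane graph. -/
noncomputable def PlaneGraph.degree {V : Type} (P : PlaneGraph V) (v : V) : ℕ :=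
  (P.graph.neighborSet v).ncard

/-- A coloring has a unique maximum on a face `f`. -/
def UniqueMaxOn {V : Type} (c : V → ℕ) (f : Set V) : Prop :=
  ∃! v, v ∈ f ∧ ∀ u ∈ f, c u ≤ c v

/-- Facial unique-maximum coloring: proper, positive colors, and each face
has exactly one incident vertex attaining the maximum color on it. -/
def PlaneGraph.IsFUM {V : Type} (P : PlaneGraph V) (c : V → ℕ) : Prop :=
  (∀ v, 1 ≤ c v) ∧ (∀ u v, P.graph.Adj u v → c u ≠ c v) ∧
    ∀ f ∈ P.Faces, UniqueMaxOn c f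

/-- `χ_fum(G) ≤ k`. -/
def PlaneGraph.fumLE {V : Type} (P : PlaneGraph V) (k : ℕ) : Prop :=
  ∃ c : V → ℕ, P.IsFUM c ∧ ∀ v, c v ≤ k

/-- A star forest: an acyclic graph in which every edge has an endpoint of
degree at most one (equivalently, a disjoint union of stars). -/
def SimpleGraph.IsStarForest {V : Type} (G : SimpleGraph V) : Prop :=
  G.IsAcyclic ∧ ∀ u v, G.Adj u v →
    (G.neighborSet u).Subsingleton ∨ (G.neighborSet v).Subsingleton

/-- The cycle graph `C_n` on `ZMod n`. -/
def cycleGraph (n : ℕ) : SimpleGraph (ZMod n) where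
  Adj i j := i ≠ j ∧ (i - j = 1 ∨ j - i = 1)
  symm := by
    constructor
    intro i j h
    exact ⟨h.1.symm, h.2.symm⟩
  loopless := by
    constructor
    intro i h
    exact h.1 rfl

/-- `G` is (spanned by) a cycle. -/
def SimpleGraph.IsCycleGraph {V : Type} (G : SimpleGraph V) : Prop :=
  ∃ (x : V) (w : G.Walk x x), w.IsCycle ∧ (∀ v, v ∈ w.support) ∧
    ∀ e ∈ G.edgeSet, e ∈ w.edges

lemma valStep {n : ℕ} (hn : 3 ≤ n) (a b : ZMod n) (h : a - b = 1) :
    a.val = b.val + 1 ∨ (a.val = 0 ∧ b.val + 1 = n) := by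
  haveI : NeZero n := ⟨by omega⟩
  have ha : a = b + 1 := by linear_combination h
  have hb : b.val < n := ZMod.val_lt b
  have hone : (1 : ZMod n).val = 1 := by
    rw [ZMod.val_one_eq_one_mod]; exact Nat.mod_eq_of_lt (by omega)
  subst ha
  rw [ZMod.val_add, hone]
  rcases Nat.lt_or_ge (b.val + 1) n with h2 | h2
  · left; exact Nat.mod_eq_of_lt h2
  · right
    have hbn : b.val + 1 = n := by omega
    rw [hbn, Nat.mod_self]
    exact ⟨rfl, rfl⟩

lemma buildColoring {n : ℕ} (hn : 3 ≤ n) (P Q : ZMod n)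
    (hPQ : (cycleGraph n).Adj P Q) (g : ℕ → ℕ) (s : ℕ) (hs : s < n)
    (hg3 : ∀ k < n, (g k = 3 ↔ k = s))
    (hgmem : ∀ k < n, g k ∈ ({1, 2, 3} : Set ℕ))
    (hgadj : ∀ i j, i < n → j < n → (i = j + 1 ∨ (i = 0 ∧ j + 1 = n)) → g i ≠ g j) :
    ∃ c : ZMod n → ℕ, c P = g 0 ∧ c Q = g 1 ∧
      (∀ v, c v ∈ ({1, 2, 3} : Set ℕ)) ∧
      (∀ u v, (cycleGraph n).Adj u v → c u ≠ c v) ∧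
      (∃! v : ZMod n, ∀ u : ZMod n, c u ≤ c v) := by
  haveI : NeZero n := ⟨by omega⟩
  obtain ⟨hne, hd'⟩ := hPQ
  set d := Q - P with hdDef
  have hd : d = 1 ∨ d = -1 := by
    rcases hd' with h | h
    · right; linear_combination -h
    · left; exact h
  have hdd : d * d = 1 := by rcases hd with h | h <;> rw [h] <;> ring
  set F : ZMod n → ℕ := fun v => ((v - P) * d).val with hF
  have hFlt : ∀ v, F v < n := fun v => ZMod.val_lt _
  have hFP : F P = 0 := by simp [hF]
  have hFQ : F Q = 1 := by
    show ((Q - P) * d).val = 1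
    rw [← hdDef, hdd, ZMod.val_one_eq_one_mod]
    exact Nat.mod_eq_of_lt (by omega)
  have hFinj : ∀ u v, F u = F v → u = v := by
    intro u v h
    have h2 : (u - P) * d = (v - P) * d := ZMod.val_injective n h
    linear_combination d * h2 - (u - v) * hdd
  have hFadj : ∀ u v, (cycleGraph n).Adj u v →
      (F u = F v + 1 ∨ (F u = 0 ∧ F v + 1 = n)) ∨
      (F v = F u + 1 ∨ (F v = 0 ∧ F u + 1 = n)) := by
    intro u v ⟨hne2, h⟩
    have key : (u - P) * d - (v - P) * d = 1 ∨ (v - P) * d - (u - P) * d = 1 := by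
      rcases h with h | h <;> rcases hd with hd1 | hd1
      · left; linear_combination d * h + hd1
      · right; linear_combination (-d) * h - hd1
      · right; linear_combination d * h + hd1
      · left; linear_combination (-d) * h - hd1
    rcases key with k | k
    · left; exact valStep hn _ _ k
    · right; exact valStep hn _ _ k
  have hgle : ∀ k < n, g k ≤ 3 := by
    intro k hk
    have := hgmem k hk
    simp only [Set.mem_insert_iff, Set.mem_singleton_iff] at this
    omega
  refine ⟨fun v => g (F v), by show g (F P) = g 0; rw [hFP], by show g (F Q) = g 1; rw [hFQ],
    fun v => hgmem _ (hFlt v), ?_, ?_⟩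
  · intro u v huv
    rcases hFadj u v huv with (h | h) | (h | h)
    · exact hgadj _ _ (hFlt u) (hFlt v) (Or.inl h)
    · exact hgadj _ _ (hFlt u) (hFlt v) (Or.inr h)
    · exact (hgadj _ _ (hFlt v) (hFlt u) (Or.inl h)).symm
    · exact (hgadj _ _ (hFlt v) (hFlt u) (Or.inr h)).symm
  · refine ⟨P + (s : ZMod n) * d, ?_, ?_⟩
    · have hFs : F (P + (s : ZMod n) * d) = s := by
        show ((P + (s : ZMod n) * d - P) * d).val = s
        have h3 : (P + (s : ZMod n) * d - P) * d = (s : ZMod n) := by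
          linear_combination (s : ZMod n) * hdd
        rw [h3, ZMod.val_cast_of_lt hs]
      intro u
      show g (F u) ≤ g (F (P + (s : ZMod n) * d))
      rw [hFs, (hg3 s hs).mpr rfl]
      exact hgle _ (hFlt u)
    · intro v' hv'
      have hFs : F (P + (s : ZMod n) * d) = s := by
        show ((P + (s : ZMod n) * d - P) * d).val = s
        have h3 : (P + (s : ZMod n) * d - P) * d = (s : ZMod n) := by
          linear_combination (s : ZMod n) * hdd
        rw [h3, ZMod.val_cast_of_lt hs]
      have h1 : g s ≤ g (F v') := by
        have h5 : g (F (P + (s : ZMod n) * d)) ≤ g (F v') := hv' _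
        rwa [hFs] at h5
      rw [(hg3 s hs).mpr rfl] at h1
      have h2 : g (F v') = 3 := le_antisymm (hgle _ (hFlt v')) h1
      have h4 : F v' = s := (hg3 _ (hFlt v')).mp h2
      apply hFinj
      rw [h4, hFs]

/-- A proper precoloring of two adjacent vertices of a cycle `C_n` (n ≥ 3)
with colors from {1,2,3} extends to a proper coloring of the whole cycle with
colors {1,2,3} having a unique vertex of maximum color. -/
theorem stmt2 (n : ℕ) (hn : 3 ≤ n) (p₁ p₂ : ZMod n)
    (hadj : (cycleGraph n).Adj p₁ p₂)
    (x y : ℕ) (hx : x ∈ ({1, 2, 3} : Set ℕ)) (hy : y ∈ ({1, 2, 3} : Set ℕ))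
    (hxy : x ≠ y) :
    ∃ c : ZMod n → ℕ, c p₁ = x ∧ c p₂ = y ∧
      (∀ v, c v ∈ ({1, 2, 3} : Set ℕ)) ∧
      (∀ u v, (cycleGraph n).Adj u v → c u ≠ c v) ∧
      (∃! v : ZMod n, ∀ u : ZMod n, c u ≤ c v) := by
  simp only [Set.mem_insert_iff, Set.mem_singleton_iff] at hx hy
  by_cases hx3 : x = 3
  · -- p₁ gets 3
    subst hx3
    have hy12 : y = 1 ∨ y = 2 := by omega
    obtain ⟨c, hc1, hc2, hmem, hprop, hmax⟩ :=
      buildColoring hn p₁ p₂ hadj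
        (fun k => if k = 0 then 3 else if k % 2 = 1 then y else 3 - y) 0 (by omega)
        (by intro k hk; rcases hy12 with h | h <;> subst h <;> (try dsimp only) <;>
              split_ifs <;> omega)
        (by intro k hk; simp only [Set.mem_insert_iff, Set.mem_singleton_iff];
            rcases hy12 with h | h <;> subst h <;> (try dsimp only) <;> split_ifs <;> omega)
        (by intro i j hi hj hij; rcases hy12 with h | h <;> subst h <;> (try dsimp only) <;>
              split_ifs <;> omega)
    exact ⟨c, by simpa using hc1, by rcases hy12 with h | h <;> subst h <;> simpa using hc2,
      hmem, hprop, hmax⟩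
  · by_cases hy3 : y = 3
    · subst hy3
      have hx12 : x = 1 ∨ x = 2 := by omega
      obtain ⟨c, hc1, hc2, hmem, hprop, hmax⟩ :=
        buildColoring hn p₂ p₁ hadj.symm
          (fun k => if k = 0 then 3 else if k % 2 = 1 then x else 3 - x) 0 (by omega)
          (by intro k hk; rcases hx12 with h | h <;> subst h <;> (try dsimp only) <;>
                split_ifs <;> omega)
          (by intro k hk; simp only [Set.mem_insert_iff, Set.mem_singleton_iff];
              rcases hx12 with h | h <;> subst h <;> (try dsimp only) <;> split_ifs <;> omega)
          (by intro i j hi hj hij; rcases hx12 with h | h <;> subst h <;> (try dsimp only) <;>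
                split_ifs <;> omega)
      exact ⟨c, by rcases hx12 with h | h <;> subst h <;> simpa using hc2,
        by simpa using hc1, hmem, hprop, hmax⟩
    · have hx12 : x = 1 ∨ x = 2 := by omega
      have hy12 : y = 1 ∨ y = 2 := by omega
      obtain ⟨c, hc1, hc2, hmem, hprop, hmax⟩ :=
        buildColoring hn p₁ p₂ hadj
          (fun k => if k + 1 = n then 3 else if k % 2 = 0 then x else y) (n - 1) (by omega)
          (by intro k hk; rcases hx12 with h | h <;> rcases hy12 with h' | h' <;>
                subst h <;> subst h' <;> (try dsimp only) <;> split_ifs <;> omega)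
          (by intro k hk; simp only [Set.mem_insert_iff, Set.mem_singleton_iff];
              rcases hx12 with h | h <;> rcases hy12 with h' | h' <;>
                subst h <;> subst h' <;> (try dsimp only) <;> split_ifs <;> omega)
          (by intro i j hi hj hij; rcases hx12 with h | h <;> rcases hy12 with h' | h' <;>
                subst h <;> subst h' <;> (try dsimp only) <;> split_ifs <;> omega)
      refine ⟨c, ?_, ?_, hmem, hprop, hmax⟩
      · rw [hc1]
        show (if 0 + 1 = n then 3 else if 0 % 2 = 0 then x else y) = x
        rw [if_neg (by omega), if_pos rfl]
      · rw [hc2]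
        show (if 1 + 1 = n then 3 else if 1 % 2 = 0 then x else y) = y
        rw [if_neg (by omega), if_neg (by omega)]
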